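/- The generating function F(u,v,x) of rooted plane trees with at most one marked corner per node, where every node of arity 1 has exactly one marked corner (u marks leaves, v marks marked corners, x marks edges), satisfies F = u + x²F²/(1−xF) + v/(1−xF)² − v. -/

import Mathlib

open MvPolynomial

/-- Rooted plane trees with marked corners: a node carries its list of
children and a list of booleans of length (arity + 1) indicating which of its
corners are marked. -/
inductive PTree where
  | node : List PTree → List Bool → PTree

namespace PTree

/-- Number of edges. -/
def edges : PTree → ℕ
  | .node cs _ => cs.length + (cs.attach.map (fun c => edges c.1)).sum
decreasing_by
  have := List.sizeOf_lt_of_mem c.2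
  simp only [PTree.node.sizeOf_spec]; omega

/-- Number of leaves (a single vertex counts as a leaf). -/
def leaves : PTree → ℕ
  | .node cs _ =>
      if cs.isEmpty then 1 else (cs.attach.map (fun c => leaves c.1)).sum
decreasing_by
  have := List.sizeOf_lt_of_mem c.2
  simp only [PTree.node.sizeOf_spec]; omega

/-- Number of marked corners. -/
def markCount : PTree → ℕ
  | .node cs m => m.count true + (cs.attach.map (fun c => markCount c.1)).sum
decreasing_by
  have := List.sizeOf_lt_of_mem c.2
  simp only [PTree.node.sizeOf_spec]; omega

end PTree

/-- Validity for the class of Section "Counting saturated structures":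
the marks list has length arity + 1, leaves carry no marks, each node has at
most one marked corner, and each node of arity 1 has exactly one marked
corner. -/
inductive Valid10 : PTree → Prop
  | node (cs : List PTree) (m : List Bool) :
      m.length = cs.length + 1 →
      (cs = [] → m.count true = 0) →
      m.count true ≤ 1 →
      (cs.length = 1 → m.count true = 1) →
      (∀ c ∈ cs, Valid10 c) →
      Valid10 (.node cs m)

/-- `F(u,v,x)`: generating function of the class; `u = X 0` marks leaves,
`v = X 1` marks marked corners, `x` marks edges. -/
noncomputable def Fgf : PowerSeries (MvPolynomial (Fin 2) ℚ) :=
  PowerSeries.mk (fun e =>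
    ∑ᶠ T : {T : PTree // Valid10 T ∧ T.edges = e},
      (X 0) ^ T.1.leaves * (X 1) ^ T.1.markCount)

local notation "u" => PowerSeries.C (R := MvPolynomial (Fin 2) ℚ) (X 0)
local notation "v" => PowerSeries.C (R := MvPolynomial (Fin 2) ℚ) (X 1)
local notation "x" => (PowerSeries.X : PowerSeries (MvPolynomial (Fin 2) ℚ))

instance : Inhabited PTree := ⟨.node [] []⟩

namespace FgfAux

abbrev R := MvPolynomial (Fin 2) ℚ

noncomputable def w (T : PTree) : R := (X 0) ^ T.leaves * (X 1) ^ T.markCount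

/-- basic unfolding lemmas -/
lemma edges_node (cs : List PTree) (m : List Bool) :
    (PTree.node cs m).edges = cs.length + (cs.map PTree.edges).sum := by
  rw [PTree.edges]; congr 1; rw [List.attach_map_val]

lemma leaves_node (cs : List PTree) (m : List Bool) :
    (PTree.node cs m).leaves =
      if cs.isEmpty then 1 else (cs.map PTree.leaves).sum := by
  rw [PTree.leaves]; congr 1; rw [List.attach_map_val]

lemma markCount_node (cs : List PTree) (m : List Bool) :
    (PTree.node cs m).markCount = m.count true + (cs.map PTree.markCount).sum := by
  rw [PTree.markCount]; congr 1; rw [List.attach_map_val]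

def TS (e : ℕ) : Set PTree := {T | Valid10 T ∧ T.edges = e}

def LS (k n : ℕ) : Set (List PTree) :=
  {cs | cs.length = k ∧ (∀ c ∈ cs, Valid10 c) ∧ (cs.map PTree.edges).sum = n}

def MS (k : ℕ) : Set (List Bool) :=
  {m | m.length = k + 1 ∧ m.count true ≤ 1 ∧ (k = 1 → m.count true = 1)}

lemma finite_lists {α : Type*} {s : Set α} (hs : s.Finite) (k : ℕ) :
    {l : List α | l.length = k ∧ ∀ c ∈ l, c ∈ s}.Finite := by
  induction k with
  | zero =>
      apply Set.Finite.subset (Set.finite_singleton [])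
      rintro l ⟨h, -⟩
      simp [List.length_eq_zero_iff.mp h]
  | succ k ih =>
      apply Set.Finite.subset ((hs.prod ih).image fun p => p.1 :: p.2)
      rintro (_ | ⟨a, l⟩) ⟨hl, hmem⟩
      · simp at hl
      · refine ⟨(a, l), Set.mem_prod.mpr ⟨hmem a (by simp), ?_⟩, rfl⟩
        simp only [List.length_cons, Nat.succ_inj] at hl
        exact ⟨hl, fun c hc => hmem c (by simp [hc])⟩

lemma TS_finite : ∀ e, (TS e).Finite := by
  intro e
  induction e using Nat.strong_induction_on with
  | _ e ih =>
    have hU : (⋃ j ∈ Finset.range e, TS j).Finite :=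
      Set.Finite.biUnion (Finset.range e).finite_toSet fun j hj =>
        ih j (Finset.mem_range.mp hj)
    have hLs : (⋃ k ∈ Finset.range (e + 1),
        {l : List PTree | l.length = k ∧ ∀ c ∈ l, c ∈ ⋃ j ∈ Finset.range e, TS j}).Finite :=
      Set.Finite.biUnion (Finset.range (e+1)).finite_toSet fun k _ => finite_lists hU k
    have hBs : {m : List Bool | m.length ≤ e + 1}.Finite := List.finite_length_le Bool (e+1)
    apply Set.Finite.subset ((hLs.prod hBs).image fun p => PTree.node p.1 p.2)
    rintro T ⟨hv, he⟩
    obtain ⟨cs, m, hm, -, -, -, hcv⟩ := hv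
    rw [edges_node] at he
    refine ⟨(cs, m), ⟨?_, ?_⟩, rfl⟩
    · simp only [Set.mem_iUnion, Finset.mem_coe, Finset.mem_range]
      refine ⟨cs.length, by omega, rfl, fun c hc => ?_⟩
      have hle : PTree.edges c ≤ (cs.map PTree.edges).sum :=
        List.le_sum_of_mem (List.mem_map_of_mem hc)
      have hlen : 1 ≤ cs.length := List.length_pos_iff.mpr (by rintro rfl; simp at hc)
      exact ⟨c.edges, by omega, hcv c hc, rfl⟩
    · show m.length ≤ e + 1; omega

lemma LS_finite (k n : ℕ) : (LS k n).Finite := by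
  have hU : (⋃ j ∈ Finset.range (n+1), TS j).Finite :=
    Set.Finite.biUnion (Finset.range (n+1)).finite_toSet fun j _ => TS_finite j
  apply Set.Finite.subset (finite_lists hU k)
  rintro cs ⟨h1, h2, h3⟩
  refine ⟨h1, fun c hc => ?_⟩
  have hle : PTree.edges c ≤ (cs.map PTree.edges).sum :=
    List.le_sum_of_mem (List.mem_map_of_mem hc)
  simp only [Set.mem_iUnion, Finset.mem_coe, Finset.mem_range]
  exact ⟨c.edges, by omega, h2 c hc, rfl⟩

lemma MS_finite (k : ℕ) : (MS k).Finite := by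
  apply Set.Finite.subset (List.finite_length_le Bool (k+1))
  rintro m ⟨h1, -, -⟩; exact h1.le

noncomputable def TF (e : ℕ) : Finset PTree := (TS_finite e).toFinset
noncomputable def LF (k n : ℕ) : Finset (List PTree) := (LS_finite k n).toFinset
noncomputable def MF (k : ℕ) : Finset (List Bool) := (MS_finite k).toFinset

lemma mem_TF {T e} : T ∈ TF e ↔ Valid10 T ∧ T.edges = e := by
  simp [TF, TS, Set.Finite.mem_toFinset]

lemma mem_LF {cs k n} : cs ∈ LF k n ↔
    cs.length = k ∧ (∀ c ∈ cs, Valid10 c) ∧ (cs.map PTree.edges).sum = n := by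
  simp [LF, LS, Set.Finite.mem_toFinset]

lemma mem_MF {m k} : m ∈ MF k ↔
    m.length = k + 1 ∧ m.count true ≤ 1 ∧ (k = 1 → m.count true = 1) := by
  simp [MF, MS, Set.Finite.mem_toFinset]

lemma coeff_Fgf (e : ℕ) : PowerSeries.coeff (R := R) e Fgf = ∑ T ∈ TF e, w T := by
  rw [Fgf, PowerSeries.coeff_mk]
  have h1 : ∑ᶠ T : (TS e), w T.1 = ∑ᶠ T ∈ TS e, w T := finsum_set_coe_eq_finsum_mem _
  have h2 := finsum_mem_eq_finite_toFinset_sum w (TS_finite e)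
  exact h1.trans h2

lemma coeff_Fgf_pow (k n : ℕ) :
    PowerSeries.coeff (R := R) n (Fgf ^ k) = ∑ cs ∈ LF k n, (cs.map w).prod := by
  induction k generalizing n with
  | zero =>
      rw [pow_zero, PowerSeries.coeff_one]
      rcases eq_or_ne n 0 with rfl | hn
      · rw [if_pos rfl]
        have : LF 0 0 = {([] : List PTree)} := by
          ext cs; simp [mem_LF, List.length_eq_zero_iff]
          rintro rfl; simp
        simp [this]
      · rw [if_neg hn]
        have : LF 0 n = ∅ := by
          ext cs
          simp only [mem_LF, List.length_eq_zero_iff, Finset.notMem_empty, iff_false, not_and]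
          rintro rfl; simpa using fun h => hn h.symm
        simp [this]
  | succ k ih =>
      rw [pow_succ', PowerSeries.coeff_mul]
      simp only [coeff_Fgf, ih]
      rw [Finset.sum_congr rfl (fun p _ => Finset.sum_mul_sum (TF p.1) (LF k p.2)
        (fun T => w T) (fun cs => (cs.map w).prod))]
      rw [Finset.sum_sigma', Finset.sum_sigma']
      refine Finset.sum_nbij' (fun r => r.1.2 :: r.2)
        (fun cs => ⟨⟨(cs.headI.edges, (cs.tail.map PTree.edges).sum), cs.headI⟩, cs.tail⟩)
        ?_ ?_ ?_ ?_ ?_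
      · rintro ⟨⟨p, T⟩, cs⟩ h
        simp only [Finset.mem_sigma, Finset.HasAntidiagonal.mem_antidiagonal, mem_TF, mem_LF] at h
        obtain ⟨⟨hp, hT1, hT2⟩, hc1, hc2, hc3⟩ := h
        exact mem_LF.mpr ⟨by simp [hc1], by
          rintro c hc
          rcases List.mem_cons.mp hc with rfl | hc
          · exact hT1
          · exact hc2 c hc, by simp [hT2, hc3, hp]⟩
      · rintro cs h
        rw [mem_LF] at h
        obtain ⟨h1, h2, h3⟩ := h
        obtain ⟨c, t, rfl⟩ : ∃ c t, cs = c :: t := by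
          cases cs with
          | nil => simp at h1
          | cons c t => exact ⟨c, t, rfl⟩
        simp only [Finset.mem_sigma, Finset.HasAntidiagonal.mem_antidiagonal, mem_TF, mem_LF,
          List.headI_cons, List.tail_cons]
        refine ⟨⟨by simpa using h3, h2 c (by simp), by simp⟩, by simpa using h1,
          fun d hd => h2 d (by simp [hd]), by simp⟩
      · rintro ⟨⟨p, T⟩, cs⟩ h
        simp only [Finset.mem_sigma, Finset.HasAntidiagonal.mem_antidiagonal, mem_TF, mem_LF] at h
        obtain ⟨⟨hp, hT1, hT2⟩, hc1, hc2, hc3⟩ := h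
        simp only [List.headI_cons, List.tail_cons]
        obtain ⟨p1, p2⟩ := p
        simp only [Finset.HasAntidiagonal.mem_antidiagonal] at hp
        simp only at hT2 hc3
        subst hT2 hc3
        rfl
      · rintro cs h
        rw [mem_LF] at h
        obtain ⟨h1, -, -⟩ := h
        cases cs with
        | nil => simp at h1
        | cons c t => rfl
      · rintro ⟨⟨p, T⟩, cs⟩ _
        simp

/-! ### Counting mark lists -/

lemma count_zero_lists (n : ℕ) :
    {m : List Bool | m.length = n ∧ m.count true = 0} = {List.replicate n false} := by
  ext m
  simp only [Set.mem_setOf_eq, Set.mem_singleton_iff, List.count_eq_zero,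
    List.eq_replicate_iff]
  constructor
  · rintro ⟨h1, h2⟩
    exact ⟨h1, fun b hb => by cases b <;> simp_all⟩
  · rintro ⟨h1, h2⟩
    exact ⟨h1, fun hmem => by simpa using h2 true hmem⟩

lemma ncard_one_lists : ∀ n : ℕ,
    {m : List Bool | m.length = n ∧ m.count true = 1}.ncard = n := by
  intro n
  induction n with
  | zero =>
      convert Set.ncard_empty (List Bool)
      ext m
      simp only [Set.mem_setOf_eq, Set.mem_empty_iff_false, iff_false, not_and,
        List.length_eq_zero_iff]
      rintro rfl; simp
  | succ n ih =>
      have hdecomp : {m : List Bool | m.length = n + 1 ∧ m.count true = 1}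
          = (fun t => true :: t) '' {m : List Bool | m.length = n ∧ m.count true = 0}
            ∪ (fun t => false :: t) '' {m : List Bool | m.length = n ∧ m.count true = 1} := by
        ext m
        constructor
        · rintro ⟨h1, h2⟩
          cases m with
          | nil => simp at h1
          | cons b t =>
              simp only [List.length_cons, Nat.succ_inj] at h1
              rw [List.count_cons] at h2
              cases b
              · exact Or.inr ⟨t, ⟨h1, by simpa using h2⟩, rfl⟩
              · exact Or.inl ⟨t, ⟨h1, by simpa using h2⟩, rfl⟩
        · rintro (⟨t, ⟨h1, h2⟩, rfl⟩ | ⟨t, ⟨h1, h2⟩, rfl⟩) <;>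
            simp [List.count_cons, h1, h2]
      rw [hdecomp]
      have hf0 : {m : List Bool | m.length = n ∧ m.count true = 0}.Finite :=
        Set.Finite.subset (List.finite_length_eq Bool n) fun m hm => hm.1
      have hf1 : {m : List Bool | m.length = n ∧ m.count true = 1}.Finite :=
        Set.Finite.subset (List.finite_length_eq Bool n) fun m hm => hm.1
      rw [Set.ncard_union_eq ?_ (hf0.image _) (hf1.image _)]
      · rw [Set.ncard_image_of_injective _ (List.cons_injective),
          Set.ncard_image_of_injective _ (List.cons_injective), ih,
          count_zero_lists]
        simp [add_comm]
      · rw [Set.disjoint_iff_forall_ne]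
        rintro a ⟨t, -, rfl⟩ b ⟨s, -, rfl⟩
        simp

/-- the polynomial `c_k` -/
noncomputable def ck (k : ℕ) : MvPolynomial (Fin 2) ℚ :=
  (if k = 1 then 0 else 1) + ((k : MvPolynomial (Fin 2) ℚ) + 1) * X 1

lemma MF_sum (k : ℕ) (hk : 1 ≤ k) :
    ∑ m ∈ MF k, (X 1 : R) ^ m.count true = ck k := by
  rcases eq_or_lt_of_le hk with h1 | h2
  · -- k = 1
    subst h1
    have hMF : MF 1 = {[true, false], [false, true]} := by
      ext m
      rw [mem_MF]
      constructor
      · rintro ⟨hl, -, hc⟩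
        have hc1 := hc rfl
        obtain ⟨a, b, rfl⟩ : ∃ a b, m = [a, b] := by
          cases m with
          | nil => simp at hl
          | cons a t =>
              cases t with
              | nil => simp at hl
              | cons b t2 =>
                  refine ⟨a, b, ?_⟩
                  simp only [List.length_cons] at hl
                  have : t2 = [] := List.length_eq_zero_iff.mp (by omega)
                  rw [this]
        cases a <;> cases b <;> simp_all [List.count_cons]
      · rintro h
        rcases Finset.mem_insert.mp h with rfl | h
        · refine ⟨rfl, by decide, fun _ => by decide⟩
        · rw [Finset.mem_singleton] at h
          subst h
          exact ⟨rfl, by decide, fun _ => by decide⟩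
    rw [hMF, Finset.sum_pair (by decide), ck]
    norm_num [List.count_cons]
    ring
  · -- k ≥ 2
    have hk2 : k ≠ 1 := by omega
    have hf1 : {m : List Bool | m.length = k + 1 ∧ m.count true = 1}.Finite :=
      Set.Finite.subset (List.finite_length_eq Bool (k+1)) fun m hm => hm.1
    have hMF : MF k = insert (List.replicate (k+1) false) hf1.toFinset := by
      ext m
      rw [mem_MF, Finset.mem_insert, Set.Finite.mem_toFinset]
      constructor
      · rintro ⟨hl, hle, -⟩
        interval_cases h : m.count true
        · left
          have := count_zero_lists (k+1)
          have hm : m ∈ {m : List Bool | m.length = k + 1 ∧ m.count true = 0} := ⟨hl, h⟩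
          rwa [this, Set.mem_singleton_iff] at hm
        · exact Or.inr ⟨hl, h⟩
      · rintro (rfl | ⟨h1, h2⟩)
        · exact ⟨by simp, by simp [List.count_replicate], fun h => absurd h hk2⟩
        · exact ⟨h1, h2.le, fun h => absurd h hk2⟩
    have hnotmem : List.replicate (k+1) false ∉ hf1.toFinset := by
      rw [Set.Finite.mem_toFinset]
      rintro ⟨-, h⟩
      simp [List.count_replicate] at h
    rw [hMF, Finset.sum_insert hnotmem]
    have hconst : ∀ m ∈ hf1.toFinset, (X 1 : R) ^ m.count true = X 1 := by
      intro m hm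
      rw [Set.Finite.mem_toFinset] at hm
      rw [hm.2, pow_one]
    rw [Finset.sum_congr rfl hconst, Finset.sum_const]
    have hcard : hf1.toFinset.card = k + 1 := by
      rw [← Set.ncard_eq_toFinset_card _ hf1]
      exact ncard_one_lists (k+1)
    rw [hcard, ck, if_neg hk2]
    simp only [List.count_replicate, if_pos, pow_zero]
    norm_num [nsmul_eq_mul]

/-! ### weight multiplicativity -/

lemma prod_w (cs : List PTree) :
    (cs.map w).prod =
      (X 0 : R) ^ ((cs.map PTree.leaves).sum) * (X 1 : R) ^ ((cs.map PTree.markCount).sum) := by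
  induction cs with
  | nil => simp
  | cons c t ih =>
      simp only [List.map_cons, List.prod_cons, List.sum_cons, ih, w, pow_add]
      ring

lemma w_node (cs : List PTree) (m : List Bool) (h : cs ≠ []) :
    w (PTree.node cs m) = (X 1 : R) ^ (m.count true) * (cs.map w).prod := by
  rw [w, leaves_node, markCount_node, if_neg (by simpa using h), prod_w, pow_add]
  ring

/-! ### the main decomposition -/

def kids : PTree → List PTree | .node cs _ => cs
def mks : PTree → List Bool | .node _ m => m

lemma node_kids_mks (T : PTree) : PTree.node (kids T) (mks T) = T := by
  cases T; rfl

lemma TF_sum (e : ℕ) (he : 1 ≤ e) :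
    ∑ T ∈ TF e, w T =
      ∑ k ∈ Finset.Icc 1 e, (∑ m ∈ MF k, (X 1 : R) ^ m.count true) *
        ∑ cs ∈ LF k (e - k), (cs.map w).prod := by
  rw [Finset.sum_congr rfl (fun k _ => Finset.sum_mul_sum (MF k) (LF k (e - k))
    (fun m => (X 1 : R) ^ m.count true) (fun cs => (cs.map w).prod))]
  rw [Finset.sum_sigma', Finset.sum_sigma']
  refine Finset.sum_nbij' (fun T => (⟨⟨(kids T).length, mks T⟩, kids T⟩ :
      Σ _ : Σ _ : ℕ, List Bool, List PTree))
    (fun r => PTree.node r.2 r.1.2) ?_ ?_ ?_ ?_ ?_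
  · rintro T hT
    rw [mem_TF] at hT
    obtain ⟨hv, hedge⟩ := hT
    cases T with
    | node cs m =>
        cases hv with
        | node _ _ hm h0 hle h1 hcv =>
            rw [edges_node] at hedge
            have hne : cs ≠ [] := by
              rintro rfl
              simp at hedge
              omega
            have hlen : 1 ≤ cs.length := List.length_pos_iff.mpr hne
            simp only [Finset.mem_sigma, Finset.mem_Icc, mem_MF, mem_LF, kids, mks]
            refine ⟨⟨⟨hlen, by omega⟩, hm, hle, h1⟩, by simp, hcv, ?_⟩
            omega
  · rintro ⟨⟨k, m⟩, cs⟩ h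
    simp only [Finset.mem_sigma, Finset.mem_Icc, mem_MF, mem_LF] at h
    obtain ⟨⟨⟨hk1, hk2⟩, hm1, hm2, hm3⟩, hc1, hc2, hc3⟩ := h
    dsimp only
    rw [mem_TF]
    constructor
    · refine Valid10.node cs m (by omega) ?_ hm2 (fun hl => hm3 (by omega)) hc2
      rintro rfl
      simp at hc1
      omega
    · rw [edges_node]
      omega
  · rintro T hT
    exact node_kids_mks T
  · rintro ⟨⟨k, m⟩, cs⟩ h
    simp only [Finset.mem_sigma, Finset.mem_Icc, mem_MF, mem_LF] at h
    obtain ⟨⟨⟨hk1, hk2⟩, -⟩, hc1, -⟩ := h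
    simp only [kids, mks]
    subst hc1
    rfl
  · rintro T hT
    rw [mem_TF] at hT
    obtain ⟨hv, hedge⟩ := hT
    cases T with
    | node cs m =>
        rw [edges_node] at hedge
        have hne : cs ≠ [] := by
          rintro rfl
          simp at hedge
          omega
        simp only [kids, mks]
        exact w_node cs m hne

/-! ### the series `Sg` and the decomposition of `Fgf` -/

noncomputable def Sg : PowerSeries R :=
  PowerSeries.mk fun e => ∑ k ∈ Finset.Icc 1 e,
    PowerSeries.coeff (R := R) e (PowerSeries.C (R := R) (ck k) * (x * Fgf) ^ k)

lemma TS_zero : TS 0 = {PTree.node [] [false]} := by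
  ext T
  constructor
  · rintro ⟨hv, he⟩
    cases T with
    | node cs m =>
        cases hv with
        | node _ _ hm h0 hle h1 hcv =>
            rw [edges_node] at he
            have hcs : cs = [] := List.length_eq_zero_iff.mp (by omega)
            subst hcs
            have hm0 := h0 rfl
            obtain ⟨b, rfl⟩ : ∃ b, m = [b] := List.length_eq_one_iff.mp (by simpa using hm)
            cases b
            · rfl
            · simp [List.count_cons] at hm0
  · rintro rfl
    refine ⟨Valid10.node [] [false] (by simp) (fun _ => by decide) (by decide)
      (by simp) (by simp), ?_⟩
    rw [edges_node]; simp

lemma coeff_zero_Fgf : PowerSeries.coeff (R := R) 0 Fgf = X 0 := by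
  rw [coeff_Fgf]
  have : TF 0 = {PTree.node [] [false]} := by
    ext T
    rw [mem_TF]
    have := Set.ext_iff.mp TS_zero T
    simpa [TS] using this
  rw [this, Finset.sum_singleton, w, leaves_node, markCount_node]
  simp [List.count_cons]

lemma Fgf_decomp : Fgf = u + Sg := by
  refine PowerSeries.ext fun e => ?_
  rcases Nat.eq_zero_or_pos e with rfl | he
  · rw [coeff_zero_Fgf, map_add, Sg, PowerSeries.coeff_mk]
    simp [PowerSeries.coeff_zero_eq_constantCoeff]
  · rw [map_add, PowerSeries.coeff_C, if_neg (by omega), zero_add, Sg,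
      PowerSeries.coeff_mk, coeff_Fgf, TF_sum e he]
    refine Finset.sum_congr rfl fun k hk => ?_
    rw [Finset.mem_Icc] at hk
    rw [MF_sum k hk.1, mul_pow, ← mul_assoc, mul_comm (PowerSeries.C (R := R) (ck k)) (x ^ k),
      mul_assoc, PowerSeries.coeff_X_pow_mul', if_pos hk.2]
    rw [PowerSeries.coeff_C_mul, coeff_Fgf_pow]

/-! ### algebraic manipulation -/

lemma coeff_Sg_eq {N j : ℕ} (hj : j ≤ N) :
    PowerSeries.coeff (R := R) j Sg =
      PowerSeries.coeff (R := R) j (∑ k ∈ Finset.Icc 1 N, PowerSeries.C (R := R) (ck k) * (x * Fgf) ^ k) := by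
  rw [Sg, PowerSeries.coeff_mk, map_sum]
  refine Finset.sum_subset (Finset.Icc_subset_Icc_right hj) fun k hk hk' => ?_
  rw [Finset.mem_Icc] at hk hk'
  have hkj : j < k := by omega
  rw [mul_pow, ← mul_assoc, mul_comm (PowerSeries.C (R := R) (ck k)) (x ^ k), mul_assoc,
    PowerSeries.coeff_X_pow_mul', if_neg (by omega)]

lemma coeff_mul_Sg (P : PowerSeries R) (e : ℕ) :
    PowerSeries.coeff (R := R) e (P * Sg) =
      PowerSeries.coeff (R := R) e (P * ∑ k ∈ Finset.Icc 1 e, PowerSeries.C (R := R) (ck k) * (x * Fgf) ^ k) := by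
  rw [PowerSeries.coeff_mul, PowerSeries.coeff_mul]
  refine Finset.sum_congr rfl fun p hp => ?_
  rw [Finset.HasAntidiagonal.mem_antidiagonal] at hp
  rw [coeff_Sg_eq (show p.2 ≤ e by omega)]

lemma tele1 (A : PowerSeries R) :
    ∀ N, 1 ≤ N → (1 - A) * ∑ k ∈ Finset.Icc 2 N, A ^ k = A ^ 2 - A ^ (N + 1) := by
  intro N
  induction N with
  | zero => omega
  | succ N ih =>
      intro _
      rcases Nat.eq_zero_or_pos N with rfl | hN
      · simp
      · rw [Finset.sum_Icc_succ_top (by omega : 2 ≤ N + 1), mul_add, ih hN]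
        ring

lemma tele2 (A : PowerSeries R) (N : ℕ) :
    (1 - A) ^ 2 * ∑ k ∈ Finset.range (N + 1), ((k : PowerSeries R) + 1) * A ^ k
      = 1 - ((N : PowerSeries R) + 2) * A ^ (N + 1) + ((N : PowerSeries R) + 1) * A ^ (N + 2) := by
  induction N with
  | zero => simp; ring
  | succ N ih =>
      rw [Finset.sum_range_succ, mul_add, ih]
      push_cast
      ring

lemma SN_eq (N : ℕ) (hN : 1 ≤ N) :
    ∑ k ∈ Finset.Icc 1 N, PowerSeries.C (R := R) (ck k) * (x * Fgf) ^ k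
      = ∑ k ∈ Finset.Icc 2 N, (x * Fgf) ^ k
        + v * ((∑ k ∈ Finset.range (N + 1), ((k : PowerSeries R) + 1) * (x * Fgf) ^ k) - 1) := by
  have hC : ∀ k : ℕ, (PowerSeries.C (R := R)) (ck k)
      = (if k = 1 then 0 else 1) + ((k : PowerSeries R) + 1) * v := by
    intro k
    rw [ck, map_add, map_mul, map_add, map_natCast, map_one, apply_ite (PowerSeries.C (R := R)),
      map_zero, map_one]
  have h1 : ∑ k ∈ Finset.Icc 1 N, PowerSeries.C (R := R) (ck k) * (x * Fgf) ^ k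
      = ∑ k ∈ Finset.Icc 1 N, ((if k = 1 then (0 : PowerSeries R) else 1) * (x * Fgf) ^ k
          + ((k : PowerSeries R) + 1) * v * (x * Fgf) ^ k) :=
    Finset.sum_congr rfl fun k _ => by rw [hC k]; ring
  rw [h1, Finset.sum_add_distrib]
  congr 1
  · rw [← Finset.add_sum_erase _ _ (Finset.mem_Icc.mpr ⟨le_refl 1, hN⟩),
      if_pos rfl, zero_mul, zero_add]
    have herase : (Finset.Icc 1 N).erase 1 = Finset.Icc 2 N := by
      rw [Finset.Icc_erase_left]
      exact (Finset.Icc_add_one_left_eq_Ioc 1 N).symm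
    rw [herase]
    refine Finset.sum_congr rfl fun k hk => ?_
    rw [Finset.mem_Icc] at hk
    rw [if_neg (by omega), one_mul]
  · have h2 : ∑ k ∈ Finset.range (N + 1), ((k : PowerSeries R) + 1) * (x * Fgf) ^ k
        = 1 + ∑ k ∈ Finset.Icc 1 N, ((k : PowerSeries R) + 1) * (x * Fgf) ^ k := by
      rw [Finset.range_eq_Ico, Finset.sum_eq_sum_Ico_succ_bot (by omega : 0 < N + 1)]
      rw [Finset.Ico_add_one_right_eq_Icc]
      norm_num
    rw [h2, add_sub_cancel_left, Finset.mul_sum]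
    exact Finset.sum_congr rfl fun k _ => by ring

lemma coeff_key (e : ℕ) :
    PowerSeries.coeff (R := R) e ((1 - x * Fgf) ^ 2 * Sg)
      = PowerSeries.coeff (R := R) e ((1 - x * Fgf) * (x * Fgf) ^ 2
          + v * (1 - (1 - x * Fgf) ^ 2)) := by
  rw [coeff_mul_Sg]
  rcases Nat.eq_zero_or_pos e with rfl | he
  · have h1 : (1 - x * Fgf) ^ 2 *
        (∑ k ∈ Finset.Icc 1 0, PowerSeries.C (R := R) (ck k) * (x * Fgf) ^ k) = 0 := by
      simp
    have h2 : (1 - x * Fgf) * (x * Fgf) ^ 2 + v * (1 - (1 - x * Fgf) ^ 2)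
        = x * (Fgf * ((1 - x * Fgf) * (x * Fgf) + v * (2 - x * Fgf))) := by ring
    rw [h1, h2, map_zero]
    rw [PowerSeries.coeff_zero_eq_constantCoeff, map_mul]
    simp
  · have t1 := tele1 (x * Fgf) e he
    have t2 := tele2 (x * Fgf) e
    rw [SN_eq e he]
    have expand : (1 - x * Fgf) ^ 2 * (∑ k ∈ Finset.Icc 2 e, (x * Fgf) ^ k
          + v * ((∑ k ∈ Finset.range (e + 1), ((k : PowerSeries R) + 1) * (x * Fgf) ^ k) - 1))
        = ((1 - x * Fgf) * (x * Fgf) ^ 2 + v * (1 - (1 - x * Fgf) ^ 2))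
          + (x * Fgf) ^ (e + 1) * (-(1 - x * Fgf)
              - v * (((e : PowerSeries R) + 2) - ((e : PowerSeries R) + 1) * (x * Fgf))) := by
      linear_combination (1 - x * Fgf) * t1 + v * t2
    rw [expand, map_add]
    have hz : PowerSeries.coeff (R := R) e ((x * Fgf) ^ (e + 1) * (-(1 - x * Fgf)
        - v * (((e : PowerSeries R) + 2) - ((e : PowerSeries R) + 1) * (x * Fgf)))) = 0 := by
      rw [mul_pow, mul_assoc, PowerSeries.coeff_X_pow_mul', if_neg (by omega)]
    rw [hz, add_zero]

lemma key_eq : (1 - x * Fgf) ^ 2 * Sg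
    = (1 - x * Fgf) * (x * Fgf) ^ 2 + v * (1 - (1 - x * Fgf) ^ 2) :=
  PowerSeries.ext coeff_key

end FgfAux

/-- `F = u + x²F²/(1−xF) + v/(1−xF)² − v`, stated in the equivalent
multiplied form (the denominator `1 − xF` has constant term 1, hence is
invertible). -/
theorem Fgf_eq :
    (1 - x * Fgf) ^ 2 * Fgf
      = (1 - x * Fgf) ^ 2 * (u - v) + (1 - x * Fgf) * x ^ 2 * Fgf ^ 2 + v := by
  have h1 := FgfAux.Fgf_decomp
  have h2 := FgfAux.key_eq
  linear_combination (1 - x * Fgf) ^ 2 * h1 + h2
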